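/- If a graph G' is obtained from a graph G by adding edges each of whose endpoints lie in distinct connected components of G, and each added edge shares no endpoint with another added edge in a way that creates a path between the endpoints of any single added edge within G plus the other added edges arranged linearly across components, then G' can be partitioned into triangles if and only if G can. More precisely: let G have connected components G₁,…,G_l, pick vertices v_i¹, v_i² in G_i, and let G' = G plus the edges {v_i², v_{i+1}¹} for 1 ≤ i ≤ l−1; then G' admits a partition of its vertex set into pairwise-adjacent triples iff G does. -/

import Mathlib

/-! ## Hypergraphs (over a label alphabet `Λ`), bonding, breaking bonds,
bonding grammars, following "Bonding Grammars" (Pshenitsyn). -/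

structure PHypergraph (Λ : Type) where
  V : Finset ℕ
  E : Finset ℕ
  att : ℕ → List ℕ
  lab : ℕ → Λ

namespace PHypergraph

variable {Λ : Type}

/-- Attachment vertices lie in `V` and attachment lengths agree with types. -/
def WellFormed (typ : Λ → ℕ) (H : PHypergraph Λ) : Prop :=
  (∀ e ∈ H.E, ∀ v ∈ H.att e, v ∈ H.V) ∧
  (∀ e ∈ H.E, (H.att e).length = typ (H.lab e))

def Adj (H : PHypergraph Λ) (u v : ℕ) : Prop :=
  ∃ e ∈ H.E, u ∈ H.att e ∧ v ∈ H.att e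

/-- There is a path between `u` and `v` in `H`. -/
def HasPath (H : PHypergraph Λ) (u v : ℕ) : Prop :=
  Relation.ReflTransGen H.Adj u v

def Connected (H : PHypergraph Λ) : Prop :=
  ∀ u ∈ H.V, ∀ v ∈ H.V, H.HasPath u v

/-- The degree of a vertex: the number of pairs `(e, i)` with
`att e ( i ) = v`, i.e. occurrences of `v` in attachment sequences. -/
def degree (H : PHypergraph Λ) (v : ℕ) : ℕ :=
  ∑ e ∈ H.E, (H.att e).count v

def degreeSet (H : PHypergraph Λ) : Set ℕ :=
  {d | ∃ v ∈ H.V, H.degree v = d}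

def Isomorphic (H G : PHypergraph Λ) : Prop :=
  ∃ f g : ℕ → ℕ,
    Set.BijOn f ↑H.V ↑G.V ∧ Set.BijOn g ↑H.E ↑G.E ∧
    ∀ e ∈ H.E, G.att (g e) = (H.att e).map f ∧ G.lab (g e) = H.lab e

end PHypergraph

/-- A single bonding step: two distinct hyperedges `e₁, e₂` whose labels can be
bonded are merged into a single new hyperedge `e'` with concatenated
attachment sequence and label `lab e₁ ⊗ lab e₂`. -/
def BondingStep {Λ : Type} (bond : Λ → Λ → Option Λ) (H H' : PHypergraph Λ) : Prop :=
  ∃ e₁ e₂ e' t,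
    e₁ ∈ H.E ∧ e₂ ∈ H.E ∧ e₁ ≠ e₂ ∧ e' ∉ H.E ∧
    bond (H.lab e₁) (H.lab e₂) = some t ∧
    H'.V = H.V ∧
    H'.E = (H.E \ {e₁, e₂}) ∪ {e'} ∧
    (∀ e ∈ H.E \ {e₁, e₂}, H'.att e = H.att e ∧ H'.lab e = H.lab e) ∧
    H'.att e' = H.att e₁ ++ H.att e₂ ∧
    H'.lab e' = t

/-- Breaking the bond `e'` (whose label is `A₁ ⊗ A₂`) of `H'`, introducing the
fresh hyperedges `e₁, e₂`, yields `H`. -/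
def BreakBondAt {Λ : Type} (typ : Λ → ℕ) (bond : Λ → Λ → Option Λ)
    (H' H : PHypergraph Λ) (e' e₁ e₂ : ℕ) : Prop :=
  ∃ A₁ A₂,
    e' ∈ H'.E ∧ e₁ ∉ H'.E ∧ e₂ ∉ H'.E ∧ e₁ ≠ e₂ ∧
    bond A₁ A₂ = some (H'.lab e') ∧
    H.V = H'.V ∧
    H.E = (H'.E \ {e'}) ∪ {e₁, e₂} ∧
    (∀ e ∈ H'.E \ {e'}, H.att e = H'.att e ∧ H.lab e = H'.lab e) ∧
    H.att e₁ = (H'.att e').take (typ A₁) ∧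
    H.att e₂ = (H'.att e').drop (typ A₁) ∧
    H.lab e₁ = A₁ ∧ H.lab e₂ = A₂

def BreakBond {Λ : Type} (typ : Λ → ℕ) (bond : Λ → Λ → Option Λ)
    (H' H : PHypergraph Λ) : Prop :=
  ∃ e' e₁ e₂, BreakBondAt typ bond H' H e' e₁ e₂

/-- `BreaksTo typ bond H l F`: starting from `H` and successively breaking the
bonds listed in `l` yields `F`. -/
def BreaksTo {Λ : Type} (typ : Λ → ℕ) (bond : Λ → Λ → Option Λ) :
    PHypergraph Λ → List ℕ → PHypergraph Λ → Prop
  | H, [], F => H = F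
  | H, e :: l, F => ∃ H₁ e₁ e₂, BreakBondAt typ bond H H₁ e e₁ e₂ ∧ BreaksTo typ bond H₁ l F

/-- `H` is a disjoint union of copies of hypergraphs from `Zs`
(this plays the role of `m · Z`). -/
def IsUnionOfCopies {Λ : Type} (Zs : Set (PHypergraph Λ)) (H : PHypergraph Λ) : Prop :=
  ∃ (n : ℕ) (cV cE : ℕ → ℕ),
    (∀ v ∈ H.V, cV v < n) ∧ (∀ e ∈ H.E, cE e < n) ∧
    (∀ e ∈ H.E, ∀ v ∈ H.att e, v ∈ H.V) ∧
    (∀ e ∈ H.E, ∀ v ∈ H.att e, cV v = cE e) ∧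
    ∀ i < n, ∃ Z0 ∈ Zs, PHypergraph.Isomorphic
      ⟨H.V.filter (fun v => cV v = i), H.E.filter (fun e => cE e = i), H.att, H.lab⟩ Z0

/-- `C` is a connected component of `H`. -/
def IsComponent {Λ : Type} (H C : PHypergraph Λ) : Prop :=
  C.V ⊆ H.V ∧ C.att = H.att ∧ C.lab = H.lab ∧ C.V.Nonempty ∧
  (∀ u ∈ C.V, ∀ v ∈ H.V, (H.HasPath u v ↔ v ∈ C.V)) ∧
  ∀ e, e ∈ C.E ↔ (e ∈ H.E ∧ ∃ v ∈ H.att e, v ∈ C.V)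

/-- Disjoint union of two hypergraphs (via an even/odd renaming). -/
def hsum {Λ : Type} (H K : PHypergraph Λ) : PHypergraph Λ :=
  ⟨H.V.image (fun v => 2 * v) ∪ K.V.image (fun v => 2 * v + 1),
   H.E.image (fun e => 2 * e) ∪ K.E.image (fun e => 2 * e + 1),
   fun e => if e % 2 = 0 then (H.att (e / 2)).map (fun v => 2 * v)
            else (K.att (e / 2)).map (fun v => 2 * v + 1),
   fun e => if e % 2 = 0 then H.lab (e / 2) else K.lab (e / 2)⟩

/-- A bonding grammar: typed labels, nonterminal and terminal alphabets, a
partial bond function, and a tuple `Z` of start hypergraphs. -/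
structure BondingGrammar (Λ : Type) where
  typ : Λ → ℕ
  N : Set Λ
  T : Set Λ
  bond : Λ → Λ → Option Λ
  k : ℕ
  Z : Fin k → PHypergraph Λ

namespace BondingGrammar

variable {Λ : Type}

/-- Side conditions from the definition of a bonding grammar: `N` and `T` are
disjoint, the start hypergraphs are connected and well-formed, and the bond
function is a partial injective function `N × N ⇀ T` adding the types. -/
def WellFormed (G : BondingGrammar Λ) : Prop :=
  Disjoint G.N G.T ∧
  (∀ i, (G.Z i).Connected ∧ (G.Z i).WellFormed G.typ) ∧
  (∀ A₁ A₂ t, G.bond A₁ A₂ = some t →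
    A₁ ∈ G.N ∧ A₂ ∈ G.N ∧ t ∈ G.T ∧ G.typ t = G.typ A₁ + G.typ A₂) ∧
  (∀ A₁ A₂ B₁ B₂ t, G.bond A₁ A₂ = some t → G.bond B₁ B₂ = some t →
    A₁ = B₁ ∧ A₂ = B₂)

def ZSet (G : BondingGrammar Λ) : Set (PHypergraph Λ) :=
  {Z0 | ∃ i, Z0 = G.Z i}

/-- `G` generates `H` if some `m · Z` derives `H` by bonding steps. -/
def Generates (G : BondingGrammar Λ) (H : PHypergraph Λ) : Prop :=
  ∃ H₀, IsUnionOfCopies G.ZSet H₀ ∧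
    Relation.ReflTransGen (BondingStep G.bond) H₀ H

/-- The language of `G`: generated hypergraphs all of whose labels are terminal. -/
def Lang (G : BondingGrammar Λ) : Set (PHypergraph Λ) :=
  {H | G.Generates H ∧ ∀ e ∈ H.E, H.lab e ∈ G.T}

end BondingGrammar

/-! Finite undirected graphs, given by a Boolean adjacency function, and
partitions into triangles. -/

/-- `TriPart adj`: the vertex set can be partitioned into 3-element sets of
pairwise adjacent vertices. -/
def TriPart {n : ℕ} (adj : Fin n → Fin n → Bool) : Prop :=
  ∃ P : Finset (Finset (Fin n)),
    (∀ t ∈ P, t.card = 3 ∧ ∀ u ∈ t, ∀ v ∈ t, u ≠ v → adj u v = true) ∧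
    ∀ v : Fin n, ∃! t, t ∈ P ∧ v ∈ t

/-- A graph instance: a number of vertices together with an adjacency function. -/
def GraphInst : Type := Σ n : ℕ, Fin n → Fin n → Bool

/-- The adjacency function is symmetric and irreflexive (simple undirected graph). -/
def GoodGraph (x : GraphInst) : Prop :=
  (∀ u v, x.2 u v = x.2 v u) ∧ (∀ v, x.2 v v = false)

def degLe (x : GraphInst) (k : ℕ) : Prop :=
  ∀ v, (Finset.univ.filter (fun u => x.2 v u = true)).card ≤ k

def ConnG (x : GraphInst) : Prop :=
  ∀ u v : Fin x.1, Relation.ReflTransGen (fun a b => x.2 a b = true) u v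

/-- Partition into triangles for graphs of maximum degree 4 (NP-complete by
van Rooij et al.). -/
def PiT4 (x : GraphInst) : Prop :=
  GoodGraph x ∧ degLe x 4 ∧ TriPart x.2

/-- Problem 5Conn-PiT: partition into triangles for connected graphs of
maximum degree at most 5. -/
def PiT5conn (x : GraphInst) : Prop :=
  GoodGraph x ∧ ConnG x ∧ degLe x 5 ∧ TriPart x.2

/-- let `G` (adjacency `adj`) have connected components indexed by
`Fin l` via `comp`, pick vertices `v1 i, v2 i` in the `i`-th component, and let
`G'` (adjacency `adj'`) be `G` plus the chain edges `{v2 i, v1 (i+1)}` for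
consecutive components. Then `G'` admits a partition into triangles iff `G` does. -/
theorem connectify_triangle_partition (n l : ℕ)
    (adj adj' : Fin n → Fin n → Bool)
    (hsymm : ∀ u v, adj u v = adj v u) (hirr : ∀ v, adj v v = false)
    (comp : Fin n → Fin l)
    (hcomp : ∀ u v : Fin n,
      Relation.ReflTransGen (fun a b : Fin n => adj a b = true) u v ↔ comp u = comp v)
    (v1 v2 : Fin l → Fin n)
    (hv1 : ∀ i, comp (v1 i) = i) (hv2 : ∀ i, comp (v2 i) = i)
    (hadj' : ∀ u v, adj' u v = true ↔
      (adj u v = true ∨ ∃ i j : Fin l, (j : ℕ) = (i : ℕ) + 1 ∧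
        ((u = v2 i ∧ v = v1 j) ∨ (u = v1 j ∧ v = v2 i)))) :
    TriPart adj' ↔ TriPart adj := by
  have hc : ∀ u v : Fin n, adj u v = true → comp u = comp v := fun u v h =>
    (hcomp u v).mp (Relation.ReflTransGen.single h)
  -- key lemma: no vertex is adjacent (in adj') to both endpoints of an added edge
  have key : ∀ i j : Fin l, (j : ℕ) = (i : ℕ) + 1 → ∀ w : Fin n,
      w ≠ v2 i → w ≠ v1 j → adj' w (v2 i) = true → adj' w (v1 j) = true → False := by
    intro i j hij w hw2 hw1 h1 h2
    have c1 : (comp w : ℕ) = (i : ℕ) ∨ (comp w : ℕ) + 1 = (i : ℕ) := by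
      rcases (hadj' w (v2 i)).mp h1 with h | ⟨i', j', hij', h⟩
      · left; have := hc _ _ h; rw [this, hv2]
      · rcases h with ⟨hw, he⟩ | ⟨hw, he⟩
        · right
          have : (i : ℕ) = (j' : ℕ) := by
            have := congrArg comp he; rw [hv2, hv1] at this; exact congrArg Fin.val this
          rw [hw, hv2]; omega
        · exfalso
          have hii' : i = i' := by
            have := congrArg comp he; rw [hv2, hv2] at this; exact this
          have : j' = j := Fin.ext (by omega)
          exact hw1 (by rw [hw, this])
    have c2 : (comp w : ℕ) = (j : ℕ) ∨ (comp w : ℕ) = (j : ℕ) + 1 := by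
      rcases (hadj' w (v1 j)).mp h2 with h | ⟨i', j', hij', h⟩
      · left; have := hc _ _ h; rw [this, hv1]
      · rcases h with ⟨hw, he⟩ | ⟨hw, he⟩
        · exfalso
          have hjj' : j = j' := by
            have := congrArg comp he; rw [hv1, hv1] at this; exact this
          have : i' = i := Fin.ext (by omega)
          exact hw2 (by rw [hw, this])
        · right
          have : (j : ℕ) = (i' : ℕ) := by
            have := congrArg comp he; rw [hv1, hv2] at this; exact congrArg Fin.val this
          rw [hw, hv1]; omega
    omega
  constructor
  · rintro ⟨P, hP, hcov⟩
    refine ⟨P, ?_, hcov⟩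
    intro t ht
    obtain ⟨hcard, hpa⟩ := hP t ht
    refine ⟨hcard, ?_⟩
    intro u hu v hv huv
    by_contra hne
    have hadj'' : adj' u v = true := hpa u hu v hv huv
    rcases (hadj' u v).mp hadj'' with h | ⟨i, j, hij, h⟩
    · exact hne h
    · -- find a third vertex w
      have hv' : v ∈ t.erase u := Finset.mem_erase.mpr ⟨Ne.symm huv, hv⟩
      have : ((t.erase u).erase v).Nonempty := by
        rw [← Finset.card_pos, Finset.card_erase_of_mem hv',
          Finset.card_erase_of_mem hu, hcard]
        omega
      obtain ⟨w, hwmem⟩ := this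
      obtain ⟨hwv, hwu, hwt⟩ : w ≠ v ∧ w ≠ u ∧ w ∈ t := by
        rcases Finset.mem_erase.mp hwmem with ⟨h1, h2⟩
        rcases Finset.mem_erase.mp h2 with ⟨h3, h4⟩
        exact ⟨h1, h3, h4⟩
      have hwu' : adj' w u = true := hpa w hwt u hu hwu
      have hwv' : adj' w v = true := hpa w hwt v hv hwv
      rcases h with ⟨hu2, hv2'⟩ | ⟨hu1, hv2'⟩
      · exact key i j hij w (hu2 ▸ hwu) (hv2' ▸ hwv) (hu2 ▸ hwu') (hv2' ▸ hwv')
      · exact key i j hij w (hv2' ▸ hwv) (hu1 ▸ hwu) (hv2' ▸ hwv') (hu1 ▸ hwu')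
  · rintro ⟨P, hP, hcov⟩
    refine ⟨P, ?_, hcov⟩
    intro t ht
    obtain ⟨hcard, hpa⟩ := hP t ht
    exact ⟨hcard, fun u hu v hv huv => (hadj' u v).mpr (Or.inl (hpa u hu v hv huv))⟩
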